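/- A subset S of the natural numbers is eventually periodic (i.e., there exist N and d ≥ 1 such that for all n ≥ N, n ∈ S iff n+d ∈ S) if and only if its generating function S_q = Σ_{n ∈ S} q^n is a rational function of q on the interval (-1,1). -/

import Mathlib

set_option maxHeartbeats 1000000

noncomputable def genFun (S : Set ℕ) (q : ℝ) : ℝ := ∑' n : S, q ^ (n : ℕ)

def EventuallyPeriodic (S : Set ℕ) : Prop :=
  ∃ N d : ℕ, 1 ≤ d ∧ ∀ n ≥ N, (n ∈ S ↔ n + d ∈ S)

open Classical in
lemma genFun_eq (S : Set ℕ) (q : ℝ) :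
    genFun S q = ∑' n : ℕ, (if n ∈ S then (1:ℝ) else 0) * q ^ n := by
  rw [genFun, tsum_subtype]
  congr 1; funext n
  by_cases h : n ∈ S <;> simp [Set.indicator, h]

lemma summable_aux {a : ℕ → ℝ} {C : ℝ} (h : ∀ n, |a n| ≤ C) {q : ℝ} (hq : |q| < 1) :
    Summable fun n => a n * q ^ n := by
  apply Summable.of_norm_bounded (g := fun n => C * |q| ^ n)
    (((summable_geometric_of_lt_one (abs_nonneg q) hq)).mul_left C)
  intro n
  rw [norm_mul, norm_pow]
  exact mul_le_mul_of_nonneg_right (h n) (by positivity)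

lemma coeffs_zero {d : ℕ → ℝ} {C : ℝ} (hC : ∀ n, |d n| ≤ C)
    (h : ∀ q : ℝ, q ∈ Set.Ioo (0:ℝ) (1/2) → ∑' n, d n * q ^ n = 0) :
    ∀ n, d n = 0 := by
  have hC0 : 0 ≤ C := le_trans (abs_nonneg _) (hC 0)
  intro n
  induction n using Nat.strong_induction_on with
  | _ n ih =>
    have key : ∀ q ∈ Set.Ioo (0:ℝ) (1/2), ∑' k, d (k + n) * q ^ k = 0 := by
      intro q hq
      have hq1 : |q| < 1 := by
        rw [abs_of_pos hq.1]; linarith [hq.2]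
      have hs : Summable fun k => d k * q ^ k := summable_aux hC hq1
      have := Summable.sum_add_tsum_nat_add (f := fun k => d k * q ^ k) n hs
      rw [h q hq] at this
      have hzero : ∑ i ∈ Finset.range n, d i * q ^ i = 0 := by
        apply Finset.sum_eq_zero
        intro i hi
        rw [ih i (Finset.mem_range.mp hi), zero_mul]
      rw [hzero, zero_add] at this
      have hrw : ∀ k, d (k + n) * q ^ (k + n) = q ^ n * (d (k + n) * q ^ k) := by
        intro k; rw [pow_add]; ring
      rw [tsum_congr hrw, tsum_mul_left] at this
      rcases mul_eq_zero.mp this with h1 | h2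
      · exact absurd h1 (pow_ne_zero n (ne_of_gt hq.1))
      · exact h2
    have est : ∀ q ∈ Set.Ioo (0:ℝ) (1/2), |d n| ≤ 2 * C * q := by
      intro q hq
      have hq1 : |q| < 1 := by rw [abs_of_pos hq.1]; linarith [hq.2]
      have hs : Summable fun k => d (k + n) * q ^ k := summable_aux (fun k => hC _) hq1
      have h0 := Summable.sum_add_tsum_nat_add (f := fun k => d (k + n) * q ^ k) 1 hs
      rw [key q hq] at h0
      simp only [Finset.range_one, Finset.sum_singleton, pow_zero, mul_one, zero_add] at h0
      have hd : d n = -∑' k, d (k + 1 + n) * q ^ (k + 1) := by linarith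
      have hsgeom : Summable fun k : ℕ => C * q ^ (k + 1) := by
        have := (summable_geometric_of_lt_one (le_of_lt hq.1) (by linarith [hq.2])).mul_left (C * q)
        apply this.congr
        intro k; rw [pow_succ']; ring
      have hs2 : Summable fun k : ℕ => d (k + 1 + n) * q ^ (k + 1) := by
        have := summable_aux (a := fun k => d (k + n)) (fun k => hC _) hq1
        exact (this.comp_injective (add_left_injective 1)).congr (by intro k; simp [add_assoc, add_comm 1 n])
      have habs : Summable fun k : ℕ => |d (k + 1 + n)| * |q| ^ (k + 1) := by
        simpa [abs_mul, abs_pow] using hs2.abs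
      have hb : |∑' k, d (k + 1 + n) * q ^ (k + 1)| ≤ ∑' k : ℕ, C * q ^ (k + 1) := by
        calc |∑' k, d (k + 1 + n) * q ^ (k + 1)|
            ≤ ∑' k : ℕ, |d (k + 1 + n)| * |q| ^ (k + 1) := by
              have := norm_tsum_le_tsum_norm (f := fun k => d (k + 1 + n) * q ^ (k + 1))
                (by simpa [abs_mul, abs_pow] using hs2.abs)
              simpa using this
          _ ≤ ∑' k : ℕ, C * q ^ (k + 1) := by
              apply Summable.tsum_le_tsum _ habs hsgeom
              intro k
              rw [abs_of_pos hq.1]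
              exact mul_le_mul_of_nonneg_right (hC _) (pow_nonneg hq.1.le _)
      have hgeval : ∑' k : ℕ, C * q ^ (k + 1) = C * q * (1 - q)⁻¹ := by
        have : ∀ k : ℕ, C * q ^ (k + 1) = (C * q) * q ^ k := by intro k; rw [pow_succ']; ring
        rw [tsum_congr this, tsum_mul_left, tsum_geometric_of_norm_lt_one (by simpa using hq1)]
      have hinv : (1 - q)⁻¹ ≤ 2 := by
        rw [inv_le_iff_one_le_mul₀ (by linarith [hq.2])]
        linarith [hq.2]
      rw [hd, abs_neg]
      calc |∑' k, d (k + 1 + n) * q ^ (k + 1)| ≤ C * q * (1 - q)⁻¹ := by rw [← hgeval]; exact hb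
        _ ≤ C * q * 2 := by
            apply mul_le_mul_of_nonneg_left hinv (mul_nonneg hC0 hq.1.le)
        _ = 2 * C * q := by ring
    by_contra hne
    have hpos : 0 < |d n| := abs_pos.mpr hne
    have hq : (min (1/4) (|d n| / (2 * C + 1))) ∈ Set.Ioo (0:ℝ) (1/2) := by
      constructor
      · apply lt_min (by norm_num) (by positivity)
      · exact lt_of_le_of_lt (min_le_left _ _) (by norm_num)
    have hest := est _ hq
    have h2 : 2 * C * min (1/4) (|d n| / (2 * C + 1)) < |d n| := by
      calc 2 * C * min (1/4) (|d n| / (2 * C + 1))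
          ≤ 2 * C * (|d n| / (2 * C + 1)) := by
            apply mul_le_mul_of_nonneg_left (min_le_right _ _) (by positivity)
        _ < |d n| := by
            rw [div_eq_inv_mul, ← mul_assoc]
            have hlt : 2 * C * (2 * C + 1)⁻¹ < 1 := by
              rw [mul_inv_lt_iff₀ (by positivity), one_mul]
              linarith
            nlinarith
    linarith

open Polynomial in
open Classical in
lemma forward_dir (S : Set ℕ) (h : EventuallyPeriodic S) :
    ∃ P Q : Polynomial ℝ,
        (∀ q ∈ Set.Ioo (-1 : ℝ) 1, Polynomial.eval q Q ≠ 0) ∧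
        (∀ q ∈ Set.Ioo (-1 : ℝ) 1,
          genFun S q = Polynomial.eval q P / Polynomial.eval q Q) := by
  obtain ⟨N, d, hd, hper⟩ := h
  haveI : NeZero d := ⟨by omega⟩
  set a : ℕ → ℝ := fun n => if n ∈ S then 1 else 0 with ha
  have haC : ∀ n, |a n| ≤ 1 := by
    intro n; by_cases h : n ∈ S <;> simp [ha, h]
  have haper : ∀ j r, a (N + (j * d + r)) = a (N + r) := by
    intro j
    induction j with
    | zero => simp
    | succ j ih =>
      intro r
      have : N + ((j + 1) * d + r) = (N + (j * d + r)) + d := by ring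
      rw [this]
      have hmem : (N + (j * d + r)) ∈ S ↔ (N + (j * d + r)) + d ∈ S :=
        hper _ (by omega)
      have : a ((N + (j * d + r)) + d) = a (N + (j * d + r)) := by
        simp only [ha]
        by_cases hm : N + (j * d + r) ∈ S
        · rw [if_pos hm, if_pos (hmem.mp hm)]
        · rw [if_neg hm, if_neg (fun hc => hm (hmem.mpr hc))]
      rw [this, ih r]
  refine ⟨(∑ n ∈ Finset.range N, if n ∈ S then (X:ℝ[X]) ^ n else 0) * (1 - X ^ d)
      + ∑ r ∈ Finset.range d, if N + r ∈ S then (X:ℝ[X]) ^ (N + r) else 0,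
    1 - X ^ d, ?_, ?_⟩
  · intro q hq
    have hq1 : |q| < 1 := abs_lt.mpr ⟨hq.1, hq.2⟩
    have : |q ^ d| < 1 := by
      rw [abs_pow]
      exact pow_lt_one₀ (abs_nonneg q) hq1 (by omega)
    simp only [eval_sub, eval_one, eval_pow, eval_X]
    intro hc
    have h1 : q ^ d = 1 := by linarith
    have h2 : |q ^ d| < 1 := by
      rw [abs_pow]; exact pow_lt_one₀ (abs_nonneg q) hq1 (by omega)
    rw [h1] at h2; simp at h2
  · intro q hq
    have hq1 : |q| < 1 := abs_lt.mpr ⟨hq.1, hq.2⟩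
    have hqd : ‖q ^ d‖ < 1 := by
      rw [Real.norm_eq_abs, abs_pow]
      exact pow_lt_one₀ (abs_nonneg q) hq1 (by omega)
    have hQne : (1 : ℝ) - q ^ d ≠ 0 := by
      intro hc
      rw [Real.norm_eq_abs] at hqd
      have : q ^ d = 1 := by linarith
      rw [this] at hqd; simp at hqd
    have hs : Summable fun n => a n * q ^ n := summable_aux haC hq1
    have hsplit := Summable.sum_add_tsum_nat_add (f := fun n => a n * q ^ n) N hs
    -- tail
    set f : ℕ → ℝ := fun k => a (k + N) * q ^ (k + N) with hf
    have hsf : Summable f := (summable_nat_add_iff N).mpr hs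
    have hre : ∑' p : ℕ × Fin d, f ((Nat.divModEquiv d).symm p) = ∑' k, f k :=
      Equiv.tsum_eq (Nat.divModEquiv d).symm f
    have hsp : Summable fun p : ℕ × Fin d => f ((Nat.divModEquiv d).symm p) :=
      (Equiv.summable_iff (Nat.divModEquiv d).symm).mpr hsf
    have hterm : ∀ (j : ℕ) (r : Fin d),
        f ((Nat.divModEquiv d).symm (j, r)) = a (N + r) * q ^ (N + (r:ℕ)) * (q ^ d) ^ j := by
      intro j r
      have he : ((Nat.divModEquiv d).symm (j, r) : ℕ) = j * d + r := rfl
      rw [he, hf]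
      have h1 : (j * d + (r:ℕ)) + N = N + (j * d + (r:ℕ)) := by ring
      simp only [h1, haper j r]
      rw [show N + (j * d + (r:ℕ)) = (N + (r:ℕ)) + d * j by ring, pow_add, pow_mul,
        mul_assoc]
    have htail : ∑' k, f k
        = (∑ r ∈ Finset.range d, a (N + r) * q ^ (N + r)) * (1 - q ^ d)⁻¹ := by
      rw [← hre, Summable.tsum_prod hsp]
      have : ∀ j : ℕ, ∑' r : Fin d, f ((Nat.divModEquiv d).symm (j, r))
          = ∑ r : Fin d, a (N + r) * q ^ (N + (r:ℕ)) * (q ^ d) ^ j := by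
        intro j
        rw [tsum_fintype]
        exact Finset.sum_congr rfl fun r _ => hterm j r
      rw [tsum_congr this]
      rw [Summable.tsum_finsetSum (by
        intro r _
        exact (summable_geometric_of_norm_lt_one hqd).mul_left _)]
      rw [show (∑ r ∈ Finset.range d, a (N + r) * q ^ (N + r)) = ∑ r : Fin d, a (N + r) * q ^ (N + (r:ℕ)) from (Fin.sum_univ_eq_sum_range _ d).symm]
      rw [Finset.sum_mul]
      apply Finset.sum_congr rfl
      intro r _
      rw [tsum_mul_left, tsum_geometric_of_norm_lt_one hqd]
    -- assemble
    have hgen : genFun S q = (∑ i ∈ Finset.range N, a i * q ^ i)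
        + (∑ r ∈ Finset.range d, a (N + r) * q ^ (N + r)) * (1 - q ^ d)⁻¹ := by
      rw [genFun_eq, ← hsplit, htail]
    rw [hgen]
    have hevalA : Polynomial.eval q (∑ n ∈ Finset.range N, if n ∈ S then (X:ℝ[X]) ^ n else 0)
        = ∑ i ∈ Finset.range N, a i * q ^ i := by
      rw [Polynomial.eval_finset_sum]
      apply Finset.sum_congr rfl
      intro i _
      by_cases h : i ∈ S <;> simp [ha, h]
    have hevalB : Polynomial.eval q (∑ r ∈ Finset.range d, if N + r ∈ S then (X:ℝ[X]) ^ (N + r) else 0)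
        = ∑ r ∈ Finset.range d, a (N + r) * q ^ (N + r) := by
      rw [Polynomial.eval_finset_sum]
      apply Finset.sum_congr rfl
      intro r _
      by_cases h : N + r ∈ S <;> simp [ha, h]
    simp only [eval_add, eval_mul, eval_sub, eval_one, eval_pow, eval_X, hevalA, hevalB]
    field_simp

open Classical in
lemma backward_coeffs (S : Set ℕ) (P Q : Polynomial ℝ)
    (hQ : ∀ q ∈ Set.Ioo (-1 : ℝ) 1, Polynomial.eval q Q ≠ 0)
    (hgen : ∀ q ∈ Set.Ioo (-1 : ℝ) 1,
      genFun S q = Polynomial.eval q P / Polynomial.eval q Q) :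
    ∀ n, (∑ j ∈ Finset.range (Q.natDegree + 1),
      (if j ≤ n then Q.coeff j * (if (n - j) ∈ S then (1:ℝ) else 0) else 0)) = P.coeff n := by
  set K := Q.natDegree with hK
  set a : ℕ → ℝ := fun n => if n ∈ S then (1:ℝ) else 0 with ha
  have haC : ∀ n, |a n| ≤ 1 := by intro n; by_cases h : n ∈ S <;> simp [ha, h]
  set c : ℕ → ℝ := fun n => ∑ j ∈ Finset.range (K + 1),
      (if j ≤ n then Q.coeff j * a (n - j) else 0) with hc
  set CQ : ℝ := ∑ j ∈ Finset.range (K + 1), |Q.coeff j| with hCQ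
  set CP : ℝ := ∑ j ∈ Finset.range (P.natDegree + 1), |P.coeff j| with hCP
  have hCQ0 : 0 ≤ CQ := Finset.sum_nonneg fun _ _ => abs_nonneg _
  have hCP0 : 0 ≤ CP := Finset.sum_nonneg fun _ _ => abs_nonneg _
  have hcB : ∀ n, |c n| ≤ CQ := by
    intro n
    refine (Finset.abs_sum_le_sum_abs _ _).trans (Finset.sum_le_sum fun j _ => ?_)
    by_cases h : j ≤ n
    · rw [if_pos h, abs_mul]
      calc |Q.coeff j| * |a (n - j)| ≤ |Q.coeff j| * 1 :=
            mul_le_mul_of_nonneg_left (haC _) (abs_nonneg _)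
        _ = |Q.coeff j| := mul_one _
    · rw [if_neg h]; simp
  have hpB : ∀ n, |P.coeff n| ≤ CP := by
    intro n
    by_cases h : n ≤ P.natDegree
    · exact Finset.single_le_sum (f := fun j => |P.coeff j|) (fun _ _ => abs_nonneg _)
        (Finset.mem_range.mpr (by omega))
    · rw [Polynomial.coeff_eq_zero_of_natDegree_lt (by omega)]
      simpa using hCP0
  have hdB : ∀ n, |c n - P.coeff n| ≤ CQ + CP := by
    intro n
    calc |c n - P.coeff n| ≤ |c n| + |P.coeff n| := abs_sub _ _
      _ ≤ CQ + CP := add_le_add (hcB n) (hpB n)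
  have hzero : ∀ q : ℝ, q ∈ Set.Ioo (0:ℝ) (1/2) →
      ∑' n, (c n - P.coeff n) * q ^ n = 0 := by
    intro q hq
    have hqI : q ∈ Set.Ioo (-1:ℝ) 1 := ⟨by linarith [hq.1], by linarith [hq.2]⟩
    have hq1 : |q| < 1 := abs_lt.mpr ⟨hqI.1, hqI.2⟩
    have hsa : Summable fun n => a n * q ^ n := summable_aux haC hq1
    have hsc : Summable fun n => c n * q ^ n := summable_aux hcB hq1
    have hsp : Summable fun n => P.coeff n * q ^ n := summable_aux hpB hq1
    -- the c-sum equals Q.eval q * genFun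
    have hFs : ∀ j : ℕ, Summable fun n =>
        (if j ≤ n then Q.coeff j * a (n - j) else 0) * q ^ n := by
      intro j
      apply summable_aux (C := |Q.coeff j|) _ hq1
      intro n
      by_cases h : j ≤ n
      · rw [if_pos h, abs_mul]
        calc |Q.coeff j| * |a (n - j)| ≤ |Q.coeff j| * 1 :=
              mul_le_mul_of_nonneg_left (haC _) (abs_nonneg _)
          _ = |Q.coeff j| := mul_one _
      · rw [if_neg h]; simp
    have hFval : ∀ j : ℕ, (∑' n, (if j ≤ n then Q.coeff j * a (n - j) else 0) * q ^ n)
        = Q.coeff j * q ^ j * ∑' n, a n * q ^ n := by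
      intro j
      have hsplit := Summable.sum_add_tsum_nat_add
        (f := fun n => (if j ≤ n then Q.coeff j * a (n - j) else 0) * q ^ n) j (hFs j)
      have h1 : ∑ i ∈ Finset.range j, (if j ≤ i then Q.coeff j * a (i - j) else 0) * q ^ i
          = 0 := by
        apply Finset.sum_eq_zero
        intro i hi
        have := Finset.mem_range.mp hi
        rw [if_neg (by omega : ¬ j ≤ i), zero_mul]
      rw [h1, zero_add] at hsplit
      rw [← hsplit]
      have h2 : ∀ n : ℕ, (if j ≤ n + j then Q.coeff j * a (n + j - j) else 0) * q ^ (n + j)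
          = (Q.coeff j * q ^ j) * (a n * q ^ n) := by
        intro n
        rw [if_pos (by omega), Nat.add_sub_cancel, pow_add]
        ring
      rw [tsum_congr h2, tsum_mul_left]
    have hcsum : ∑' n, c n * q ^ n = Polynomial.eval q Q * genFun S q := by
      have h3 : ∀ n : ℕ, c n * q ^ n = ∑ j ∈ Finset.range (K + 1),
          (if j ≤ n then Q.coeff j * a (n - j) else 0) * q ^ n := by
        intro n; simp only [hc]; exact Finset.sum_mul _ _ _
      rw [tsum_congr h3, Summable.tsum_finsetSum (fun j _ => hFs j)]
      rw [Finset.sum_congr rfl (fun j _ => hFval j), ← Finset.sum_mul]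
      rw [genFun_eq S q, Polynomial.eval_eq_sum_range, ← hK]
    have hpsum : ∑' n, P.coeff n * q ^ n = Polynomial.eval q P := by
      rw [tsum_eq_sum (s := Finset.range (P.natDegree + 1)) (by
        intro b hb
        rw [Polynomial.coeff_eq_zero_of_natDegree_lt
          (by simpa using Finset.mem_range.not.mp hb |> fun h => by omega), zero_mul])]
      rw [Polynomial.eval_eq_sum_range]
    have hsub : ∀ n : ℕ, (c n - P.coeff n) * q ^ n = c n * q ^ n - P.coeff n * q ^ n := by
      intro n; ring
    rw [tsum_congr hsub, Summable.tsum_sub hsc hsp, hcsum, hpsum, hgen q hqI,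
      mul_div_cancel₀ _ (hQ q hqI), sub_self]
  have := coeffs_zero hdB hzero
  intro n
  have h := this n
  linarith [h]

open Classical in
lemma backward_period (S : Set ℕ) (P Q : Polynomial ℝ)
    (hQ0 : Q.coeff 0 ≠ 0)
    (hrec : ∀ n, (∑ j ∈ Finset.range (Q.natDegree + 1),
      (if j ≤ n then Q.coeff j * (if (n - j) ∈ S then (1:ℝ) else 0) else 0)) = P.coeff n) :
    EventuallyPeriodic S := by
  set K := Q.natDegree with hK
  set a : ℕ → ℝ := fun n => if n ∈ S then (1:ℝ) else 0 with ha
  set M0 : ℕ := K + P.natDegree + 1 with hM0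
  -- clean recurrence for n ≥ M0
  have hrec2 : ∀ n, M0 ≤ n →
      Q.coeff 0 * a n + (∑ i ∈ Finset.range K, Q.coeff (i + 1) * a (n - (i + 1))) = 0 := by
    intro n hn
    have h1 := hrec n
    have h2 : P.coeff n = 0 := Polynomial.coeff_eq_zero_of_natDegree_lt (by omega)
    rw [h2] at h1
    rw [Finset.sum_range_succ'] at h1
    simp only [if_pos (Nat.zero_le n), Nat.sub_zero] at h1
    have h3 : ∀ i ∈ Finset.range K,
        (if i + 1 ≤ n then Q.coeff (i + 1) * a (n - (i + 1)) else 0)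
        = Q.coeff (i + 1) * a (n - (i + 1)) := by
      intro i hi
      have := Finset.mem_range.mp hi
      rw [if_pos (by omega)]
    rw [Finset.sum_congr rfl h3] at h1
    linarith [h1]
  -- step lemma
  have hstep : ∀ n n', M0 ≤ n → M0 ≤ n' →
      (∀ j, 1 ≤ j → j ≤ K → a (n - j) = a (n' - j)) → a n = a n' := by
    intro n n' hn hn' hj
    have h1 := hrec2 n hn
    have h2 := hrec2 n' hn'
    have h3 : (∑ i ∈ Finset.range K, Q.coeff (i + 1) * a (n - (i + 1)))
        = ∑ i ∈ Finset.range K, Q.coeff (i + 1) * a (n' - (i + 1)) := by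
      apply Finset.sum_congr rfl
      intro i hi
      have := Finset.mem_range.mp hi
      rw [hj (i + 1) (by omega) (by omega)]
    have h4 : Q.coeff 0 * a n = Q.coeff 0 * a n' := by linarith
    exact mul_left_cancel₀ hQ0 h4
  -- membership transfer via a
  have hmem : ∀ n n', a n = a n' → (n ∈ S ↔ n' ∈ S) := by
    intro n n' h
    simp only [ha] at h
    constructor
    · intro hn
      by_contra hc
      rw [if_pos hn, if_neg hc] at h
      norm_num at h
    · intro hn
      by_contra hc
      rw [if_neg hc, if_pos hn] at h
      norm_num at h
  -- main claim from a repeated state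
  have main : ∀ m1 m2 : ℕ, m1 < m2 →
      (∀ i, i < K → a (M0 + m1 + i) = a (M0 + m2 + i)) → EventuallyPeriodic S := by
    intro m1 m2 hlt hstate
    set n1 : ℕ := M0 + m1 with hn1
    set d : ℕ := m2 - m1 with hd
    have hd1 : 1 ≤ d := by omega
    have hM0n2 : M0 + m2 = n1 + d := by omega
    have claim : ∀ i, a (n1 + i) = a (n1 + d + i) := by
      intro i
      induction i using Nat.strong_induction_on with
      | _ i ih =>
        by_cases hi : i < K
        · have := hstate i hi
          rw [hM0n2] at this
          exact this
        · push_neg at hi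
          apply hstep (n1 + i) (n1 + d + i) (by omega) (by omega)
          intro j hj1 hjK
          have e1 : n1 + i - j = n1 + (i - j) := by omega
          have e2 : n1 + d + i - j = n1 + d + (i - j) := by omega
          rw [e1, e2]
          exact ih (i - j) (by omega)
    refine ⟨n1, d, hd1, ?_⟩
    intro n hn
    have := claim (n - n1)
    have e1 : n1 + (n - n1) = n := by omega
    have e2 : n1 + d + (n - n1) = n + d := by omega
    rw [e1, e2] at this
    exact hmem n (n + d) this
  -- pigeonhole
  obtain ⟨m, m', hne, heq⟩ := Finite.exists_ne_map_eq_of_infinite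
    (fun m : ℕ => fun i : Fin K => decide (M0 + m + (i : ℕ) ∈ S))
  have hstate : ∀ m1 m2 : ℕ,
      ((fun i : Fin K => decide (M0 + m1 + (i:ℕ) ∈ S)) = fun i : Fin K => decide (M0 + m2 + (i:ℕ) ∈ S)) →
      ∀ i, i < K → a (M0 + m1 + i) = a (M0 + m2 + i) := by
    intro m1 m2 h i hi
    have := congrFun h ⟨i, hi⟩
    simp only [decide_eq_decide] at this
    simp only [ha]
    by_cases hm : M0 + m1 + i ∈ S
    · rw [if_pos hm, if_pos (this.mp hm)]
    · rw [if_neg hm, if_neg (fun hc => hm (this.mpr hc))]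
  rcases lt_or_gt_of_ne hne with hlt | hlt
  · exact main m m' hlt (hstate m m' heq)
  · exact main m' m hlt (hstate m' m heq.symm)

theorem eventuallyPeriodic_iff_rational (S : Set ℕ) :
    EventuallyPeriodic S ↔
      ∃ P Q : Polynomial ℝ,
        (∀ q ∈ Set.Ioo (-1 : ℝ) 1, Polynomial.eval q Q ≠ 0) ∧
        (∀ q ∈ Set.Ioo (-1 : ℝ) 1,
          genFun S q = Polynomial.eval q P / Polynomial.eval q Q) := by
  constructor
  · exact forward_dir S
  · rintro ⟨P, Q, hQ, hgen⟩
    have hQ0 : Q.coeff 0 ≠ 0 := by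
      rw [Polynomial.coeff_zero_eq_eval_zero]
      exact hQ 0 ⟨by norm_num, by norm_num⟩
    exact backward_period S P Q hQ0 (backward_coeffs S P Q hQ hgen)
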